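/- (One-stage selection: the γ-rule weakly beats group-oblivious and demographic parity weakly beats the γ-rule.) For x in the feasible set X = {x ∈ (0,1) : (α₁ − p_A x)/p_B ∈ (0,1)}, let t_A(x), t_B(x) be the unique reals with Φ^c(t_A(x)) = x and Φ^c(t_B(x)) = (α₁ − p_A x)/p_B, and define N(x) = p_A·φ(t_A(x))/s_A + p_B·φ(t_B(x))/s_B. Let x^obl = Φ^c((θ̂ − μ)/s_A) where θ̂ is the unique group-oblivious threshold with p_A·Φ^c((θ̂−μ)/s_A) + p_B·Φ^c((θ̂−μ)/s_B) = α₁. For γ ∈ [0,1] set x^γ = min(max(x^obl, γα₁/(p_B + γ p_A)), α₁/(p_A + γ p_B)). Then x^γ ∈ X, and N(α₁) ≥ N(x^γ) ≥ N(x^obl), where the first inequality is strict whenever x^γ ≠ α₁ and the second is strict whenever x^γ ≠ x^obl. -/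

import Mathlib

open MeasureTheory Set

/-- Standard normal density. -/
noncomputable def phi (t : ℝ) : ℝ := Real.exp (-t ^ 2 / 2) / Real.sqrt (2 * Real.pi)

/-- Standard normal CDF. -/
noncomputable def Phi (t : ℝ) : ℝ := ∫ u in Set.Iic t, phi u

/-- Standard normal complementary CDF. -/
noncomputable def Phic (t : ℝ) : ℝ := 1 - Phi t

lemma phi_pos (t : ℝ) : 0 < phi t :=
  div_pos (Real.exp_pos _) (Real.sqrt_pos.2 (by positivity))
lemma continuous_phi : Continuous phi := by unfold phi; fun_prop
lemma integrable_phi : Integrable phi := by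
  have : Integrable (fun t : ℝ => Real.exp (-(1/2) * t ^ 2)) := integrable_exp_neg_mul_sq (by norm_num)
  have := this.div_const (Real.sqrt (2 * Real.pi))
  convert this using 2 with t
  unfold phi; ring_nf
lemma integral_phi : ∫ u, phi u = 1 := by
  have h := integral_gaussian (1/2 : ℝ)
  unfold phi
  rw [integral_div]
  have : ∀ t : ℝ, Real.exp (-t ^ 2 / 2) = Real.exp (-(1/2:ℝ) * t ^ 2) := by intro t; ring_nf
  simp_rw [this, h]
  rw [div_eq_one_iff_eq (by positivity)]
  rw [show (2:ℝ) * Real.pi = Real.pi / (1/2) by ring]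
lemma hasDerivAt_Phi (t : ℝ) : HasDerivAt Phi (phi t) t := by
  have key : ∀ u : ℝ, Phi u = Phi 0 + ∫ x in (0:ℝ)..u, phi x := by
    intro u
    have := intervalIntegral.integral_Iic_sub_Iic (f := phi) (μ := volume) (a := (0:ℝ)) (b := u)
      integrable_phi.integrableOn integrable_phi.integrableOn
    unfold Phi; linarith [this]
  have h1 : HasDerivAt (fun u => Phi 0 + ∫ x in (0:ℝ)..u, phi x) (0 + phi t) t := by
    exact (hasDerivAt_const t (Phi 0)).add (intervalIntegral.integral_hasDerivAt_right
      (f := phi) (a := (0:ℝ)) (b := t)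
      (integrable_phi.intervalIntegrable)
      (continuous_phi.stronglyMeasurableAtFilter _ _)
      continuous_phi.continuousAt)
  rw [zero_add] at h1
  exact h1.congr_of_eventuallyEq (Filter.Eventually.of_forall fun u => (key u))
lemma hasDerivAt_Phic (t : ℝ) : HasDerivAt Phic (-phi t) t := by
  have := (hasDerivAt_const t (1:ℝ)).sub (hasDerivAt_Phi t)
  exact this.congr_deriv (by ring)
lemma strictAnti_Phic : StrictAnti Phic :=
  strictAnti_of_hasDerivAt_neg (f' := fun t => -phi t)
    (fun t => hasDerivAt_Phic t) (fun t => neg_neg_iff_pos.2 (phi_pos t))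
lemma Phi_pos (t : ℝ) : 0 < Phi t := by
  unfold Phi
  rw [setIntegral_pos_iff_support_of_nonneg_ae
    (Filter.Eventually.of_forall fun u => (phi_pos u).le) integrable_phi.integrableOn]
  have : Function.support phi = univ := eq_univ_of_forall fun u => (phi_pos u).ne'
  rw [this, univ_inter]
  simp
lemma Phi_lt_one (t : ℝ) : Phi t < 1 := by
  have hsplit : Phi t + ∫ u in Set.Ioi t, phi u = 1 := by
    rw [← integral_phi]
    exact intervalIntegral.integral_Iic_add_Ioi integrable_phi.integrableOn integrable_phi.integrableOn
  have hpos : 0 < ∫ u in Set.Ioi t, phi u := by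
    rw [setIntegral_pos_iff_support_of_nonneg_ae
      (Filter.Eventually.of_forall fun u => (phi_pos u).le) integrable_phi.integrableOn]
    have : Function.support phi = univ := eq_univ_of_forall fun u => (phi_pos u).ne'
    rw [this, univ_inter]
    simp
  linarith
lemma Phic_pos (t : ℝ) : 0 < Phic t := by have := Phi_lt_one t; unfold Phic; linarith
lemma Phic_lt_one (t : ℝ) : Phic t < 1 := by have := Phi_pos t; unfold Phic; linarith

lemma continuousAt_of_Phic_eq {g L : ℝ → ℝ} {s : Set ℝ} (hs : IsOpen s) {x : ℝ} (hx : x ∈ s)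
    (hL : ContinuousAt L x) (hg : ∀ y ∈ s, Phic (g y) = L y) : ContinuousAt g x := by
  rw [ContinuousAt, Metric.tendsto_nhds]
  intro ε hε
  have hLx : L x = Phic (g x) := (hg x hx).symm
  have hlo : Phic (g x + ε) < L x := by rw [hLx]; exact strictAnti_Phic (by linarith)
  have hhi : L x < Phic (g x - ε) := by rw [hLx]; exact strictAnti_Phic (by linarith)
  have hev1 : ∀ᶠ y in nhds x, y ∈ s := hs.mem_nhds hx
  have hev2 : ∀ᶠ y in nhds x, L y ∈ Set.Ioo (Phic (g x + ε)) (Phic (g x - ε)) :=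
    hL (isOpen_Ioo.mem_nhds ⟨hlo, hhi⟩)
  filter_upwards [hev1, hev2] with y hy1 hy2
  have h1 : Phic (g x + ε) < Phic (g y) := by rw [hg y hy1]; exact hy2.1
  have h2 : Phic (g y) < Phic (g x - ε) := by rw [hg y hy1]; exact hy2.2
  have hgy1 : g y < g x + ε := strictAnti_Phic.lt_iff_gt.mp h1
  have hgy2 : g x - ε < g y := strictAnti_Phic.lt_iff_gt.mp h2
  rw [Real.dist_eq, abs_lt]
  constructor <;> linarith

lemma hasDerivAt_of_Phic_eq {g : ℝ → ℝ} {c m : ℝ} (hm : m ≠ 0) {s : Set ℝ} (hs : IsOpen s)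
    {x : ℝ} (hx : x ∈ s) (hg : ∀ y ∈ s, Phic (g y) = c + m * y) :
    HasDerivAt g (-(m / phi (g x))) x := by
  set L : ℝ → ℝ := fun y => c + m * y with hLdef
  set Li : ℝ → ℝ := fun z => (z - c) / m with hLidef
  have hLiL : ∀ y, Li (L y) = y := by intro y; simp only [hLdef, hLidef]; field_simp; ring
  have hLLi : ∀ z, L (Li z) = z := by intro z; simp only [hLdef, hLidef]; field_simp; ring
  have hsopen : IsOpen (Li ⁻¹' s) := by
    apply IsOpen.preimage _ hs
    simp only [hLidef]; fun_prop
  have hmem : L x ∈ Li ⁻¹' s := by simp only [Set.mem_preimage, hLiL]; exact hx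
  have hg2 : ∀ z ∈ Li ⁻¹' s, Phic ((g ∘ Li) z) = z := by
    intro z hz
    have := hg (Li z) hz
    rw [Function.comp_apply, this]
    have h := hLLi z
    simpa only [hLdef] using h
  have hcont : ContinuousAt (g ∘ Li) (L x) :=
    continuousAt_of_Phic_eq hsopen hmem continuousAt_id (by simpa using hg2)
  have hgLix : (g ∘ Li) (L x) = g x := by rw [Function.comp_apply, hLiL]
  have hDgt : HasDerivAt (g ∘ Li) ((-phi (g x))⁻¹) (L x) := by
    apply HasDerivAt.of_local_left_inverse hcont
    · rw [hgLix]; exact hasDerivAt_Phic (g x)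
    · exact neg_ne_zero.2 (phi_pos (g x)).ne'
    · filter_upwards [hsopen.mem_nhds hmem] with z hz using hg2 z hz
  have hL : HasDerivAt L m x := by
    exact ((hasDerivAt_id x).const_mul m |>.const_add c).congr_deriv (mul_one m)
  have hcomp : HasDerivAt (fun y => (g ∘ Li) (L y)) ((-phi (g x))⁻¹ * m) x := hDgt.comp x hL
  have heq : (fun y => (g ∘ Li) (L y)) = g := by
    funext y; rw [Function.comp_apply, hLiL]
  rw [heq] at hcomp
  convert hcomp using 1
  have hph := (phi_pos (g x)).ne'
  field_simp

lemma hasDerivAt_phi (t : ℝ) : HasDerivAt phi (-t * phi t) t := by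
  have h1 : HasDerivAt (fun t : ℝ => -t ^ 2 / 2) (-t) t := by
    have := ((hasDerivAt_pow 2 t).neg).div_const 2
    exact this.congr_deriv (by push_cast; ring)
  have h2 : HasDerivAt (fun t : ℝ => Real.exp (-t ^ 2 / 2)) (Real.exp (-t^2/2) * (-t)) t :=
    (Real.hasDerivAt_exp _).comp t h1
  have := h2.div_const (Real.sqrt (2 * Real.pi))
  exact this.congr_deriv (by unfold phi; ring)


/-- Feasible first-stage selection fractions `x` for group `A`
(with `p_B = 1 - p_A`). -/
def feas (pA α₁ : ℝ) : Set ℝ :=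
  {x : ℝ | x ∈ Set.Ioo (0 : ℝ) 1 ∧ (α₁ - pA * x) / (1 - pA) ∈ Set.Ioo (0 : ℝ) 1}

/-- `N(x) = p_A φ(t_A(x))/s_A + p_B φ(t_B(x))/s_B`, where `t_A(x), t_B(x)` are
the standardized thresholds selecting fractions `x` and `(α₁ - p_A x)/p_B`. -/
noncomputable def Nfun (σW σA σB pA : ℝ) (tA tB : ℝ → ℝ) (x : ℝ) : ℝ :=
  pA * phi (tA x) / Real.sqrt (σW ^ 2 + σA ^ 2)
    + (1 - pA) * phi (tB x) / Real.sqrt (σW ^ 2 + σB ^ 2)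

lemma isOpen_feas (pA α₁ : ℝ) : IsOpen (feas pA α₁) := by
  have h : feas pA α₁ = Set.Ioo 0 1 ∩ (fun x => (α₁ - pA * x) / (1 - pA)) ⁻¹' Set.Ioo 0 1 := rfl
  rw [h]
  exact isOpen_Ioo.inter (IsOpen.preimage (by fun_prop) isOpen_Ioo)

lemma feas_ordConnected {pA α₁ : ℝ} (hpA : pA ∈ Set.Ioo (0:ℝ) 1) {u v w : ℝ}
    (hu : u ∈ feas pA α₁) (hw : w ∈ feas pA α₁) (h1 : u ≤ v) (h2 : v ≤ w) :
    v ∈ feas pA α₁ := by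
  have hpB : (0:ℝ) < 1 - pA := by linarith [hpA.2]
  simp only [feas, Set.mem_setOf_eq, Set.mem_Ioo] at hu hw ⊢
  obtain ⟨⟨hu0, hu1⟩, ⟨huB0, huB1⟩⟩ := hu
  obtain ⟨⟨hw0, hw1⟩, ⟨hwB0, hwB1⟩⟩ := hw
  have hwB0' : 0 < α₁ - pA * w := by
    have := mul_pos hwB0 hpB
    rwa [div_mul_cancel₀ _ hpB.ne'] at this
  have huB1' : α₁ - pA * u < 1 - pA := (div_lt_one hpB).mp huB1
  refine ⟨⟨by linarith, by linarith⟩, ?_, ?_⟩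
  · apply div_pos _ hpB
    nlinarith [mul_nonneg hpA.1.le (sub_nonneg.2 h2)]
  · rw [div_lt_one hpB]
    nlinarith [mul_nonneg hpA.1.le (sub_nonneg.2 h1)]

lemma hasDerivAt_Nfun {σW σA σB pA α₁ : ℝ} {tA tB : ℝ → ℝ}
    (hpA : pA ∈ Set.Ioo (0:ℝ) 1)
    (hsA : 0 < Real.sqrt (σW ^ 2 + σA ^ 2)) (hsB : 0 < Real.sqrt (σW ^ 2 + σB ^ 2))
    (htA : ∀ x ∈ feas pA α₁, Phic (tA x) = x)
    (htB : ∀ x ∈ feas pA α₁, Phic (tB x) = (α₁ - pA * x) / (1 - pA))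
    {x : ℝ} (hx : x ∈ feas pA α₁) :
    HasDerivAt (Nfun σW σA σB pA tA tB)
      (pA * tA x / Real.sqrt (σW ^ 2 + σA ^ 2)
        - pA * tB x / Real.sqrt (σW ^ 2 + σB ^ 2)) x := by
  have hpB : (0:ℝ) < 1 - pA := by linarith [hpA.2]
  have hdtA : HasDerivAt tA (-((1:ℝ) / phi (tA x))) x :=
    hasDerivAt_of_Phic_eq (c := 0) (m := 1) one_ne_zero (isOpen_feas pA α₁) hx
      (fun y hy => by rw [htA y hy]; ring)
  have hdtB : HasDerivAt tB (-(-(pA / (1 - pA)) / phi (tB x))) x :=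
    hasDerivAt_of_Phic_eq (c := α₁ / (1 - pA)) (m := -(pA / (1 - pA)))
      (neg_ne_zero.2 (div_pos hpA.1 hpB).ne') (isOpen_feas pA α₁) hx
      (fun y hy => by rw [htB y hy]; field_simp; ring)
  have h1 : HasDerivAt (fun y => phi (tA y))
      (-(tA x) * phi (tA x) * (-((1:ℝ) / phi (tA x)))) x :=
    (hasDerivAt_phi (tA x)).comp x hdtA
  have h2 : HasDerivAt (fun y => phi (tB y))
      (-(tB x) * phi (tB x) * (-(-(pA / (1 - pA)) / phi (tB x)))) x :=
    (hasDerivAt_phi (tB x)).comp x hdtB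
  have hsum := ((h1.const_mul pA).div_const (Real.sqrt (σW ^ 2 + σA ^ 2))).add
    ((h2.const_mul (1 - pA)).div_const (Real.sqrt (σW ^ 2 + σB ^ 2)))
  have hfun : Nfun σW σA σB pA tA tB = fun y =>
      pA * phi (tA y) / Real.sqrt (σW ^ 2 + σA ^ 2)
        + (1 - pA) * phi (tB y) / Real.sqrt (σW ^ 2 + σB ^ 2) := rfl
  rw [hfun]
  refine hsum.congr_deriv ?_
  have hA := (phi_pos (tA x)).ne'
  have hB := (phi_pos (tB x)).ne'
  field_simp
  ring

set_option maxHeartbeats 1000000 in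
/-- One-stage selection: the `γ`-rule weakly beats group-oblivious and
demographic parity weakly beats the `γ`-rule, with strictness whenever the
corresponding selection fractions differ. -/
theorem gamma_rule_one_stage
    (μ σW σA σB pA α₁ γ θhat : ℝ) (tA tB : ℝ → ℝ)
    (hσW : 0 < σW) (hσB : 0 ≤ σB) (hσAB : σB < σA)
    (hpA : pA ∈ Set.Ioo (0 : ℝ) 1) (hα : α₁ ∈ Set.Ioo (0 : ℝ) 1)
    (hγ : γ ∈ Set.Icc (0 : ℝ) 1)
    (htA : ∀ x ∈ feas pA α₁, Phic (tA x) = x)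
    (htB : ∀ x ∈ feas pA α₁, Phic (tB x) = (α₁ - pA * x) / (1 - pA))
    (hθ : pA * Phic ((θhat - μ) / Real.sqrt (σW ^ 2 + σA ^ 2))
        + (1 - pA) * Phic ((θhat - μ) / Real.sqrt (σW ^ 2 + σB ^ 2)) = α₁)
    (xobl xγ : ℝ)
    (hxobl : xobl = Phic ((θhat - μ) / Real.sqrt (σW ^ 2 + σA ^ 2)))
    (hxγ : xγ = min (max xobl (γ * α₁ / ((1 - pA) + γ * pA))) (α₁ / (pA + γ * (1 - pA)))) :
    xγ ∈ feas pA α₁ ∧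
    Nfun σW σA σB pA tA tB xγ ≤ Nfun σW σA σB pA tA tB α₁ ∧
    Nfun σW σA σB pA tA tB xobl ≤ Nfun σW σA σB pA tA tB xγ ∧
    (xγ ≠ α₁ → Nfun σW σA σB pA tA tB xγ < Nfun σW σA σB pA tA tB α₁) ∧
    (xγ ≠ xobl → Nfun σW σA σB pA tA tB xobl < Nfun σW σA σB pA tA tB xγ) := by
  have hsA : 0 < Real.sqrt (σW ^ 2 + σA ^ 2) := Real.sqrt_pos.2 (by positivity)
  have hsB : 0 < Real.sqrt (σW ^ 2 + σB ^ 2) := Real.sqrt_pos.2 (by positivity)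
  have hsBA : Real.sqrt (σW ^ 2 + σB ^ 2) < Real.sqrt (σW ^ 2 + σA ^ 2) :=
    Real.sqrt_lt_sqrt (by positivity) (by nlinarith)
  set sA := Real.sqrt (σW ^ 2 + σA ^ 2) with hsAdef
  set sB := Real.sqrt (σW ^ 2 + σB ^ 2) with hsBdef
  set a := (θhat - μ) / sA with hadef
  set b := (θhat - μ) / sB with hbdef
  have hpB : (0 : ℝ) < 1 - pA := by linarith [hpA.2]
  have hxobl0 : 0 < xobl := by rw [hxobl]; exact Phic_pos a
  have hxobl1 : xobl < 1 := by rw [hxobl]; exact Phic_lt_one a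
  have hoblB : (α₁ - pA * xobl) / (1 - pA) = Phic b := by
    rw [hxobl]; field_simp; linarith [hθ]
  have hxoblfeas : xobl ∈ feas pA α₁ :=
    ⟨⟨hxobl0, hxobl1⟩, by rw [hoblB]; exact ⟨Phic_pos b, Phic_lt_one b⟩⟩
  have hα₁feas : α₁ ∈ feas pA α₁ := by
    refine ⟨hα, ?_⟩
    have h : (α₁ - pA * α₁) / (1 - pA) = α₁ := by field_simp
    rw [h]; exact hα
  have hLden : 0 < (1 - pA) + γ * pA := by nlinarith [hγ.1, hpA.1]
  have hUden : 0 < pA + γ * (1 - pA) := by nlinarith [hγ.1, hpA.1]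
  have hLα : γ * α₁ / ((1 - pA) + γ * pA) ≤ α₁ := by
    rw [div_le_iff₀ hLden]
    nlinarith [mul_nonneg (mul_nonneg hα.1.le hpB.le) (sub_nonneg.2 hγ.2)]
  have hαU : α₁ ≤ α₁ / (pA + γ * (1 - pA)) := by
    rw [le_div_iff₀ hUden]
    nlinarith [mul_nonneg (mul_nonneg hα.1.le hpB.le) (sub_nonneg.2 hγ.2)]
  rcases lt_trichotomy xobl α₁ with hlt | heq | hgt
  · -- xobl < α₁ : N strictly increasing on [xobl, α₁]
    have hb1 : xobl ≤ xγ := by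
      rw [hxγ]; exact le_min (le_max_left _ _) (hlt.le.trans hαU)
    have hb2 : xγ ≤ α₁ := by
      rw [hxγ]; exact min_le_of_left_le (max_le hlt.le hLα)
    have hsub : Set.Icc xobl α₁ ⊆ feas pA α₁ := fun y hy =>
      feas_ordConnected hpA hxoblfeas hα₁feas hy.1 hy.2
    have hxγfeas : xγ ∈ feas pA α₁ := hsub ⟨hb1, hb2⟩
    have hPa : Phic a < α₁ := hxobl ▸ hlt
    have hba : Phic a < Phic b := by
      have h' : (1 - pA) * Phic a < (1 - pA) * Phic b := by linarith
      exact lt_of_mul_lt_mul_left h' hpB.le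
    have hblta : b < a := strictAnti_Phic.lt_iff_gt.mp hba
    have hθμ : θhat - μ < 0 := by
      by_contra h
      push_neg at h
      have : a ≤ b := by
        rw [hadef, hbdef, div_le_div_iff₀ hsA hsB]
        nlinarith [mul_nonneg h (sub_nonneg.2 hsBA.le)]
      linarith
    have ha0 : a < 0 := div_neg_of_neg_of_pos hθμ hsA
    have hmono : StrictMonoOn (Nfun σW σA σB pA tA tB) (Set.Icc xobl α₁) := by
      apply strictMonoOn_of_hasDerivWithinAt_pos (f' := fun y => pA * tA y / sA - pA * tB y / sB)
        (convex_Icc _ _)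
        (fun y hy => (hasDerivAt_Nfun hpA hsA hsB htA htB (hsub hy)).continuousAt.continuousWithinAt)
        (fun y hy => (hasDerivAt_Nfun hpA hsA hsB htA htB
          (hsub (interior_subset hy))).hasDerivWithinAt)
      intro y hy
      rw [interior_Icc] at hy
      obtain ⟨hy1, hy2⟩ := hy
      have hyfeas : y ∈ feas pA α₁ := hsub ⟨hy1.le, hy2.le⟩
      have htAy : Phic (tA y) = y := htA y hyfeas
      have htBy : Phic (tB y) = (α₁ - pA * y) / (1 - pA) := htB y hyfeas
      have h1 : tA y < a := by
        apply strictAnti_Phic.lt_iff_gt.mp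
        rw [htAy, ← hxobl]
        exact hy1
      have h2 : tB y < tA y := by
        apply strictAnti_Phic.lt_iff_gt.mp
        rw [htAy, htBy, lt_div_iff₀ hpB]
        have hexp : y * (1 - pA) = y - pA * y := by ring
        linarith
      have htAneg : tA y < 0 := h1.trans ha0
      have key : 0 < tA y * sB - tB y * sA := by
        nlinarith [mul_pos hsB (sub_pos.2 h2),
          mul_pos_of_neg_of_neg (h2.trans htAneg) (sub_neg.2 hsBA)]
      have heq2 : pA * tA y / sA - pA * tB y / sB = pA * (tA y * sB - tB y * sA) / (sA * sB) := by
        field_simp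
      rw [heq2]
      exact div_pos (mul_pos hpA.1 key) (mul_pos hsA hsB)
    have hmem1 : xγ ∈ Set.Icc xobl α₁ := ⟨hb1, hb2⟩
    have hmemL : xobl ∈ Set.Icc xobl α₁ := ⟨le_refl _, hlt.le⟩
    have hmemR : α₁ ∈ Set.Icc xobl α₁ := ⟨hlt.le, le_refl _⟩
    exact ⟨hxγfeas, hmono.monotoneOn hmem1 hmemR hb2, hmono.monotoneOn hmemL hmem1 hb1,
      fun h => hmono hmem1 hmemR (hb2.lt_of_ne h),
      fun h => hmono hmemL hmem1 (hb1.lt_of_ne (Ne.symm h))⟩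
  · -- xobl = α₁
    have hxγeq : xγ = α₁ := by rw [hxγ, heq, max_eq_left hLα, min_eq_left hαU]
    exact ⟨by rw [hxγeq]; exact hα₁feas, le_of_eq (by rw [hxγeq]),
      le_of_eq (by rw [hxγeq, heq]), fun h => absurd hxγeq h,
      fun h => absurd (hxγeq.trans heq.symm) h⟩
  · -- α₁ < xobl : N strictly decreasing on [α₁, xobl]
    have hb1 : α₁ ≤ xγ := by
      rw [hxγ]; exact le_min (le_max_of_le_left hgt.le) hαU
    have hb2 : xγ ≤ xobl := by
      rw [hxγ]; exact min_le_of_left_le (max_le le_rfl (hLα.trans hgt.le))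
    have hsub : Set.Icc α₁ xobl ⊆ feas pA α₁ := fun y hy =>
      feas_ordConnected hpA hα₁feas hxoblfeas hy.1 hy.2
    have hxγfeas : xγ ∈ feas pA α₁ := hsub ⟨hb1, hb2⟩
    have hPa : α₁ < Phic a := hxobl ▸ hgt
    have hba : Phic b < Phic a := by
      have h' : (1 - pA) * Phic b < (1 - pA) * Phic a := by linarith
      exact lt_of_mul_lt_mul_left h' hpB.le
    have hagtb : a < b := strictAnti_Phic.lt_iff_gt.mp hba
    have hθμ : 0 < θhat - μ := by
      by_contra h
      push_neg at h
      have : b ≤ a := by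
        rw [hadef, hbdef, div_le_div_iff₀ hsB hsA]
        nlinarith [mul_nonneg (neg_nonneg.2 h) (sub_nonneg.2 hsBA.le)]
      linarith
    have ha0 : 0 < a := div_pos hθμ hsA
    have hanti : StrictAntiOn (Nfun σW σA σB pA tA tB) (Set.Icc α₁ xobl) := by
      apply strictAntiOn_of_hasDerivWithinAt_neg (f' := fun y => pA * tA y / sA - pA * tB y / sB)
        (convex_Icc _ _)
        (fun y hy => (hasDerivAt_Nfun hpA hsA hsB htA htB (hsub hy)).continuousAt.continuousWithinAt)
        (fun y hy => (hasDerivAt_Nfun hpA hsA hsB htA htB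
          (hsub (interior_subset hy))).hasDerivWithinAt)
      intro y hy
      rw [interior_Icc] at hy
      obtain ⟨hy1, hy2⟩ := hy
      have hyfeas : y ∈ feas pA α₁ := hsub ⟨hy1.le, hy2.le⟩
      have htAy : Phic (tA y) = y := htA y hyfeas
      have htBy : Phic (tB y) = (α₁ - pA * y) / (1 - pA) := htB y hyfeas
      have h1 : a < tA y := by
        apply strictAnti_Phic.lt_iff_gt.mp
        rw [htAy, ← hxobl]
        exact hy2
      have h2 : tA y < tB y := by
        apply strictAnti_Phic.lt_iff_gt.mp
        rw [htAy, htBy, div_lt_iff₀ hpB]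
        have hexp : y * (1 - pA) = y - pA * y := by ring
        linarith
      have htApos : 0 < tA y := ha0.trans h1
      have key : tA y * sB - tB y * sA < 0 := by
        nlinarith [mul_pos hsB (sub_pos.2 h2), mul_pos (htApos.trans h2) (sub_pos.2 hsBA)]
      have heq2 : pA * tA y / sA - pA * tB y / sB = pA * (tA y * sB - tB y * sA) / (sA * sB) := by
        field_simp
      rw [heq2]
      exact div_neg_of_neg_of_pos (mul_neg_of_pos_of_neg hpA.1 key) (mul_pos hsA hsB)
    have hmem1 : xγ ∈ Set.Icc α₁ xobl := ⟨hb1, hb2⟩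
    have hmemL : α₁ ∈ Set.Icc α₁ xobl := ⟨le_refl _, hgt.le⟩
    have hmemR : xobl ∈ Set.Icc α₁ xobl := ⟨hgt.le, le_refl _⟩
    exact ⟨hxγfeas, hanti.antitoneOn hmemL hmem1 hb1, hanti.antitoneOn hmem1 hmemR hb2,
      fun h => hanti hmemL hmem1 (hb1.lt_of_ne (Ne.symm h)),
      fun h => hanti hmem1 hmemR (hb2.lt_of_ne h)⟩
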